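/- Let f : x ⟶ w, g : w ⟶ x and f' : y ⟶ x, g' : x ⟶ y be 1-cells in a bicategory equipped with adjunctions (f ⊣ g, v, n) and (f' ⊣ g', v', n'), and consider the composite adjunction f' ≫ f ⊣ g ≫ g'. (a) If the unit n of f ⊣ g is invertible, then the unit of the composite adjunction is invertible if and only if the unit n' of f' ⊣ g' is invertible. (b) If the counit v' of f' ⊣ g' is invertible, then the counit of the composite adjunction is invertible if and only if the counit v of f ⊣ g is invertible. -/
import Mathlib


open CategoryTheory Bicategory

theorem isIso_comp_right_iff' {C : Type*} [Category C] {X Y Z : C}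
    (a : X ⟶ Y) (b : Y ⟶ Z) [IsIso b] : IsIso (a ≫ b) ↔ IsIso a := by
  constructor
  · intro h; exact IsIso.of_isIso_comp_right a b
  · intro h; infer_instance

theorem isIso_comp_left_iff' {C : Type*} [Category C] {X Y Z : C}
    (a : X ⟶ Y) (b : Y ⟶ Z) [IsIso a] : IsIso (a ≫ b) ↔ IsIso b := by
  constructor
  · intro h; exact IsIso.of_isIso_comp_left a b
  · intro h; infer_instance

/-- composition of adjunctions in a bicategory.
(a) If the unit of `f ⊣ g` is invertible, the unit of the composite adjunction
`f' ≫ f ⊣ g ≫ g'` is invertible iff the unit of `f' ⊣ g'` is.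
(b) If the counit of `f' ⊣ g'` is invertible, the counit of the composite adjunction
is invertible iff the counit of `f ⊣ g` is. -/
theorem stmt0 {B : Type*} [Bicategory B] {x w y : B}
    {f : x ⟶ w} {g : w ⟶ x} {f' : y ⟶ x} {g' : x ⟶ y}
    (adj : Bicategory.Adjunction f g) (adj' : Bicategory.Adjunction f' g') :
    (IsIso adj.unit → (IsIso (adj'.comp adj).unit ↔ IsIso adj'.unit)) ∧
    (IsIso adj'.counit → (IsIso (adj'.comp adj).counit ↔ IsIso adj.counit)) := by
  constructor
  · intro h
    have e : (adj'.comp adj).unit = adj'.unit ≫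
        (BicategoricalCoherence.iso.hom ≫ ((f' ◁ adj.unit) ▷ g') ≫
          BicategoricalCoherence.iso.hom ≫ 𝟙 _) := by
      simp [Bicategory.Adjunction.comp, Bicategory.Adjunction.compUnit,
        bicategoricalComp]
    rw [e, isIso_comp_right_iff']
  · intro h
    have e : (adj'.comp adj).counit =
        ((𝟙 _ ≫ BicategoricalCoherence.iso.hom) ≫ (g ◁ adj'.counit) ▷ f ≫
          BicategoricalCoherence.iso.hom) ≫ adj.counit := by
      simp [Bicategory.Adjunction.comp, Bicategory.Adjunction.compCounit,
        bicategoricalComp]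
    rw [e, isIso_comp_left_iff']
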